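/- Let f_{j,i} : ℝⁿ → ℝ be continuously differentiable and convex for all j, i. Suppose x̃ satisfies f_{j,i}(x̃) ≤ f_{j,i}(x^k) for all j, i, and suppose x^{k+1} = x^k + α_k t^k where α_k > 0 and t^k = −Σ_{j,i} λ_{ij} ∇f_{j,i}(x^k) for some nonnegative weights λ_{ij}. Then ‖x̃ − x^{k+1}‖² ≤ ‖x̃ − x^k‖² + ‖x^k − x^{k+1}‖². -/

import Mathlib

open RealInnerProductSpace

lemma grad_ineq {n : ℕ} (f : EuclideanSpace ℝ (Fin n) → ℝ)
    (hf : ContDiff ℝ 1 f) (hconv : ConvexOn ℝ Set.univ f)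
    (x y : EuclideanSpace ℝ (Fin n)) :
    ⟪gradient f x, y - x⟫ ≤ f y - f x := by
  set g : ℝ → ℝ := fun t => f (x + t • (y - x)) with hg
  have hgconv : ConvexOn ℝ Set.univ g := by
    have := hconv.comp_affineMap (AffineMap.lineMap x y : ℝ →ᵃ[ℝ] EuclideanSpace ℝ (Fin n))
    rw [Set.preimage_univ] at this
    convert this using 1
    · rfl
    · rfl
    · rfl
    · rfl
    funext t
    show f _ = (f ∘ _) t
    simp only [Function.comp]
    rw [AffineMap.lineMap_apply_module']
    congr 1
    module
  have hgrad : HasGradientAt f (gradient f x) x :=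
    ((hf.differentiable one_ne_zero) x).hasGradientAt
  have hfd : HasFDerivAt f ((InnerProductSpace.toDual ℝ _) (gradient f x)) x := by
    rwa [← hasGradientAt_iff_hasFDerivAt]
  have hline : HasDerivAt (fun t : ℝ => x + t • (y - x)) (y - x) 0 := by
    simpa using ((hasDerivAt_id (0:ℝ)).smul_const (y - x)).const_add x
  have hgd : HasDerivAt g ⟪gradient f x, y - x⟫ 0 := by
    have hfd' : HasFDerivAt f ((InnerProductSpace.toDual ℝ _) (gradient f x))
        (x + (0:ℝ) • (y - x)) := by simpa using hfd
    have := hfd'.comp_hasDerivAt 0 hline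
    simp [g, InnerProductSpace.toDual_apply_apply] at this ⊢
    exact this
  have key := hgconv.le_slope_of_hasDerivWithinAt (Set.mem_univ (0:ℝ))
    (Set.mem_univ (1:ℝ)) one_pos (hgd.hasDerivWithinAt)
  simpa [slope, g] using key

theorem stmt_4 {n m p : ℕ}
    (f : Fin m → Fin p → EuclideanSpace ℝ (Fin n) → ℝ)
    (hf : ∀ j i, ContDiff ℝ 1 (f j i))
    (hconv : ∀ j i, ConvexOn ℝ Set.univ (f j i))
    (xk xk1 xtilde tk : EuclideanSpace ℝ (Fin n))
    (lam : Fin m → Fin p → ℝ) (hlam : ∀ j i, 0 ≤ lam j i)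
    (αk : ℝ) (hα : 0 < αk)
    (htk : tk = - ∑ j, ∑ i, lam j i • gradient (f j i) xk)
    (hstep : xk1 = xk + αk • tk)
    (hx : ∀ j i, f j i xtilde ≤ f j i xk) :
    ‖xtilde - xk1‖ ^ 2 ≤ ‖xtilde - xk‖ ^ 2 + ‖xk - xk1‖ ^ 2 := by
  have hinner : ⟪xk - xk1, xtilde - xk⟫ ≤ 0 := by
    have hxx : xk - xk1 = αk • ∑ j, ∑ i, lam j i • gradient (f j i) xk := by
      rw [hstep, htk]; module
    rw [hxx, real_inner_smul_left]
    have : ⟪∑ j, ∑ i, lam j i • gradient (f j i) xk, xtilde - xk⟫ ≤ 0 := by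
      rw [sum_inner]
      apply Finset.sum_nonpos
      intro j _
      rw [sum_inner]
      apply Finset.sum_nonpos
      intro i _
      rw [real_inner_smul_left]
      have h1 : ⟪gradient (f j i) xk, xtilde - xk⟫ ≤ f j i xtilde - f j i xk :=
        grad_ineq _ (hf j i) (hconv j i) xk xtilde
      have h2 : f j i xtilde - f j i xk ≤ 0 := sub_nonpos.mpr (hx j i)
      exact mul_nonpos_of_nonneg_of_nonpos (hlam j i) (h1.trans h2)
    exact mul_nonpos_of_nonneg_of_nonpos hα.le this
  have hsplit : xtilde - xk1 = (xtilde - xk) + (xk - xk1) := by abel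
  rw [hsplit, ← real_inner_self_eq_norm_sq, ← real_inner_self_eq_norm_sq,
    ← real_inner_self_eq_norm_sq]
  rw [real_inner_add_add_self]
  have : ⟪xtilde - xk, xk - xk1⟫ ≤ 0 := by rwa [real_inner_comm]
  linarith
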